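/- With measurement error, the expected squared residual of the population least-squares predictor equals (Λβ)^T Σ_z (Λβ) + ((I-Λ)β)^T Σ_u ((I-Λ)β), where Λ = (Σ_z + Σ_u)^{-1} Σ_u. -/

import Mathlib

open MeasureTheory ProbabilityTheory Matrix

/-- Mean vector of a random vector. -/
noncomputable def meanV {Ω : Type*} [MeasurableSpace Ω] (P : Measure Ω) {d : ℕ}
    (z : Ω → Fin d → ℝ) : Fin d → ℝ := fun i => ∫ ω, z ω i ∂P

/-- Covariance matrix of a random vector. -/
noncomputable def covM {Ω : Type*} [MeasurableSpace Ω] (P : Measure Ω) {d : ℕ}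
    (z : Ω → Fin d → ℝ) : Matrix (Fin d) (Fin d) ℝ :=
  Matrix.of fun i j => ∫ ω, (z ω i - meanV P z i) * (z ω j - meanV P z j) ∂P

lemma int_mul_L2 {Ω : Type*} [MeasurableSpace Ω] {P : Measure Ω} [IsFiniteMeasure P]
    {f g : Ω → ℝ} (hf : MemLp f 2 P) (hg : MemLp g 2 P) :
    Integrable (fun ω => f ω * g ω) P := by
  have h : MemLp (f • g) 1 P :=
    hg.smul hf
  simpa [Pi.smul_apply, smul_eq_mul, Pi.mul_def] using h.integrable le_rfl

theorem stmt_3 {Ω : Type*} [MeasurableSpace Ω] (P : Measure Ω) [IsProbabilityMeasure P]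
    {d : ℕ} (z u x : Ω → Fin d → ℝ) (y yhat : Ω → ℝ) (β : Fin d → ℝ) (α : ℝ)
    (Λ : Matrix (Fin d) (Fin d) ℝ)
    (hx : ∀ ω, x ω = fun i => z ω i + u ω i)
    (hy : ∀ ω, y ω = β ⬝ᵥ z ω + α)
    (hindep : IndepFun z u P)
    (hzL2 : ∀ i, MemLp (fun ω => z ω i) 2 P)
    (huL2 : ∀ i, MemLp (fun ω => u ω i) 2 P)
    (hu0 : ∀ i, ∫ ω, u ω i ∂P = 0)
    (hinv : IsUnit (covM P z + covM P u).det)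
    (hΛ : Λ = (covM P z + covM P u)⁻¹ * covM P u)
    (hyhat : ∀ ω, yhat ω = ((1 - Λ) *ᵥ β) ⬝ᵥ x ω + (Λ *ᵥ β) ⬝ᵥ meanV P z + α) :
    ∫ ω, (y ω - yhat ω) ^ 2 ∂P =
      (Λ *ᵥ β) ⬝ᵥ (covM P z *ᵥ (Λ *ᵥ β)) +
        ((1 - Λ) *ᵥ β) ⬝ᵥ (covM P u *ᵥ ((1 - Λ) *ᵥ β)) := by
  set a : Fin d → ℝ := Λ *ᵥ β with ha
  set b : Fin d → ℝ := (1 - Λ) *ᵥ β with hb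
  set μ : Fin d → ℝ := meanV P z with hμ
  have hab : ∀ i, b i = β i - a i := by
    intro i
    rw [hb, ha, sub_mulVec, one_mulVec]
    rfl
  -- the centered functions
  set Z : Fin d → Ω → ℝ := fun i ω => z ω i - μ i with hZdef
  set c : Fin d → Ω → ℝ := fun i ω => a i * Z i ω - b i * u ω i with hcdef
  have hZL2 : ∀ i, MemLp (Z i) 2 P := fun i => (hzL2 i).sub (memLp_const (μ i))
  have hcL2 : ∀ i, MemLp (c i) 2 P := fun i =>
    ((hZL2 i).const_mul (a i)).sub ((huL2 i).const_mul (b i))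
  -- residual
  have hres : ∀ ω, y ω - yhat ω = ∑ i, c i ω := by
    intro ω
    have h1 : ∑ i, c i ω = (∑ i, β i * z ω i) - (∑ i, b i * z ω i)
        - (∑ i, b i * u ω i) - (∑ i, a i * μ i) := by
      rw [← Finset.sum_sub_distrib, ← Finset.sum_sub_distrib, ← Finset.sum_sub_distrib]
      refine Finset.sum_congr rfl fun i _ => ?_
      simp only [hcdef, hZdef, hab i]
      ring
    rw [hy, hyhat, hx, h1]
    simp only [dotProduct, mul_add, Finset.sum_add_distrib]
    ring
  -- integrability of products
  have hint : ∀ i j, Integrable (fun ω => c i ω * c j ω) P := fun i j =>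
    int_mul_L2 (hcL2 i) (hcL2 j)
  -- compute single integrals
  have hZmean : ∀ i, ∫ ω, Z i ω ∂P = 0 := by
    intro i
    rw [hZdef]
    simp only
    rw [integral_sub ((hzL2 i).integrable one_le_two) (integrable_const _)]
    simp [hμ, meanV]
  have hindepZU : ∀ i j, IndepFun (Z i) (fun ω => u ω j) P := by
    intro i j
    exact hindep.comp ((measurable_pi_apply i).sub measurable_const) (measurable_pi_apply j)
  have hcross : ∀ i j, ∫ ω, Z i ω * u ω j ∂P = 0 := by
    intro i j
    have h := (hindepZU i j).integral_mul_eq_mul_integral (hZL2 i).aestronglyMeasurable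
      (huL2 j).aestronglyMeasurable
    rw [hZmean i, zero_mul] at h
    exact h
  have hcovu : ∀ i j, ∫ ω, u ω i * u ω j ∂P = covM P u i j := by
    intro i j
    simp [covM, meanV, hu0]
  have hcovz : ∀ i j, ∫ ω, Z i ω * Z j ω ∂P = covM P z i j := by
    intro i j
    simp [covM, meanV, hZdef, hμ]
  -- per-pair integral
  have hpair : ∀ i j, ∫ ω, c i ω * c j ω ∂P =
      a i * a j * covM P z i j + b i * b j * covM P u i j := by
    intro i j
    have I1 : Integrable (fun ω => a i * a j * (Z i ω * Z j ω)) P :=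
      (int_mul_L2 (hZL2 i) (hZL2 j)).const_mul _
    have I2 : Integrable (fun ω => a i * b j * (Z i ω * u ω j)) P :=
      (int_mul_L2 (hZL2 i) (huL2 j)).const_mul _
    have I3 : Integrable (fun ω => a j * b i * (Z j ω * u ω i)) P :=
      (int_mul_L2 (hZL2 j) (huL2 i)).const_mul _
    have I4 : Integrable (fun ω => b i * b j * (u ω i * u ω j)) P :=
      (int_mul_L2 (huL2 i) (huL2 j)).const_mul _
    have I12 : Integrable (fun ω => a i * a j * (Z i ω * Z j ω)
        - a i * b j * (Z i ω * u ω j)) P := I1.sub I2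
    have I123 : Integrable (fun ω => a i * a j * (Z i ω * Z j ω)
        - a i * b j * (Z i ω * u ω j) - a j * b i * (Z j ω * u ω i)) P := I12.sub I3
    have hexp : ∀ ω, c i ω * c j ω =
        a i * a j * (Z i ω * Z j ω) - a i * b j * (Z i ω * u ω j)
          - a j * b i * (Z j ω * u ω i) + b i * b j * (u ω i * u ω j) := by
      intro ω; simp only [hcdef]; ring
    calc ∫ ω, c i ω * c j ω ∂P
        = ∫ ω, (a i * a j * (Z i ω * Z j ω) - a i * b j * (Z i ω * u ω j)
          - a j * b i * (Z j ω * u ω i) + b i * b j * (u ω i * u ω j)) ∂P := by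
          exact integral_congr_ae (Filter.Eventually.of_forall hexp)
      _ = a i * a j * covM P z i j + b i * b j * covM P u i j := by
          rw [integral_add I123 I4, integral_sub I12 I3, integral_sub I1 I2,
            integral_const_mul, integral_const_mul, integral_const_mul, integral_const_mul,
            hcovz, hcross i j, hcross j i, hcovu]
          ring
  -- main computation
  have hsq : ∀ ω, (y ω - yhat ω) ^ 2 = ∑ i, ∑ j, c i ω * c j ω := by
    intro ω
    rw [hres ω, sq, Finset.sum_mul_sum]
  calc ∫ ω, (y ω - yhat ω) ^ 2 ∂P
      = ∫ ω, ∑ i, ∑ j, c i ω * c j ω ∂P :=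
        integral_congr_ae (Filter.Eventually.of_forall hsq)
    _ = ∑ i, ∑ j, ∫ ω, c i ω * c j ω ∂P := by
        rw [integral_finset_sum _ fun i _ => integrable_finset_sum _ fun j _ => hint i j]
        exact Finset.sum_congr rfl fun i _ => integral_finset_sum _ fun j _ => hint i j
    _ = ∑ i, ∑ j, (a i * a j * covM P z i j + b i * b j * covM P u i j) := by
        exact Finset.sum_congr rfl fun i _ => Finset.sum_congr rfl fun j _ => hpair i j
    _ = a ⬝ᵥ (covM P z *ᵥ a) + b ⬝ᵥ (covM P u *ᵥ b) := by
        simp only [dotProduct, mulVec, Finset.mul_sum, Finset.sum_add_distrib]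
        congr 1 <;> exact Finset.sum_congr rfl fun i _ =>
          Finset.sum_congr rfl fun j _ => by ring
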